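/- For any even integers b₁,…,bₙ with bᵢ ≠ 0 for i ≥ 2, the value of the finite even-integer continued fraction [b₁,…,bₙ] is an ∞-rational, i.e., a rational number a/b in lowest terms with a and b of opposite parity (or ∞ when n = 0). -/

import Mathlib

open Filter Topology OnePoint

/-- Inverse on ℚ ∪ {∞} (`Option.none` = ∞): 1/∞ = 0 and 1/0 = ∞. -/
def cfInv : Option ℚ → Option ℚ
  | Option.none => Option.some 0
  | Option.some q => if q = 0 then Option.none else Option.some q⁻¹

/-- Value of the finite continued fraction [b₁,…,bₙ] in ℚ ∪ {∞},
with `cfVal [] = Option.none` (that is, ∞). -/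
def cfVal : List ℤ → Option ℚ
  | [] => Option.none
  | b :: t => (cfInv (cfVal t)).map (fun q => (b : ℚ) + q)

/-- Embed ℚ ∪ {∞} into the extended real line ℝ ∪ {∞}. -/
def toOP : Option ℚ → OnePoint ℝ
  | Option.none => ∞
  | Option.some q => ((q : ℝ) : OnePoint ℝ)

/-- The n-th convergent (value of the first n+1 terms) of the continued fraction
with coefficients `b 0, b 1, …`. -/
def cfConv (b : ℕ → ℤ) (n : ℕ) : Option ℚ := cfVal ((List.range (n + 1)).map b)

/-- `b 0, b 1, …` is an even-integer continued fraction. -/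
def IsEICF (b : ℕ → ℤ) : Prop := (∀ i, Even (b i)) ∧ ∀ i ≥ 1, b i ≠ 0

/-- The even-integer continued fraction `b` is an expansion of `x`:
its convergents tend to `x` in the extended real line. -/
def IsEICFExpansion (b : ℕ → ℤ) (x : OnePoint ℝ) : Prop :=
  IsEICF b ∧ Tendsto (fun n => toOP (cfConv b n)) atTop (𝓝 x)


open Rat in
lemma parity_step (b : ℤ) (hb : Even b) (q : ℚ) (hq : Odd (q.num + (q.den : ℤ)))
    (hq1 : 1 < |q|) : Odd (((b : ℚ) + q⁻¹).num + (((b : ℚ) + q⁻¹).den : ℤ)) := by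
  have hq0 : q ≠ 0 := by
    intro h; rw [h] at hq1; norm_num at hq1
  have hn0 : q.num ≠ 0 := Rat.num_ne_zero.mpr hq0
  have key : (b : ℚ) + q⁻¹ = (b * q.num + (q.den : ℤ)) /. q.num := by
    rw [Rat.inv_def, Rat.divInt_eq_div, Rat.divInt_eq_div]
    have hn0' : ((q.num : ℤ) : ℚ) ≠ 0 := by exact_mod_cast hn0
    field_simp
    push_cast; ring
  set q' := (b : ℚ) + q⁻¹ with hq'
  have h2 : (b * q.num + (q.den : ℤ)) /. q.num = (⟨q'.num, q'.den, q'.den_nz, q'.reduced⟩ : ℚ) := by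
    rw [← key]
  obtain ⟨m, hm0, hmn, hmd⟩ := Rat.divInt_num_den hn0 h2
  have hsum : b * q.num + (q.den : ℤ) + q.num = (q'.num + q'.den) * m := by
    rw [hmn, hmd]; ring
  have hodd : Odd (b * q.num + (q.den : ℤ) + q.num) := by
    obtain ⟨k, hk⟩ := hb
    obtain ⟨j, hj⟩ := hq
    exact ⟨k * q.num + j, by subst hk; linear_combination hj⟩
  rw [hsum] at hodd
  exact (Int.odd_mul.mp hodd).1

lemma abs_step (b : ℤ) (hb : Even b) (hb0 : b ≠ 0) (q : ℚ) (hq1 : 1 < |q|) :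
    1 < |(b : ℚ) + q⁻¹| := by
  have h2 : (2 : ℚ) ≤ |(b : ℚ)| := by
    rw [← Int.cast_abs]
    exact_mod_cast (by obtain ⟨k, hk⟩ := hb; rw [Int.abs_eq_natAbs]; omega : (2 : ℤ) ≤ |b|)
  have hinv : |q⁻¹| < 1 := by
    rw [abs_inv]
    rw [inv_lt_one_iff₀]
    right; exact hq1
  calc 1 = 2 - 1 := by norm_num
    _ < |(b : ℚ)| - |q⁻¹| := by linarith
    _ ≤ |(b : ℚ) + q⁻¹| := by
        have := abs_sub_abs_le_abs_sub (b : ℚ) (-q⁻¹)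
        simp only [abs_neg, sub_neg_eq_add] at this
        linarith

lemma eicf_aux (l : List ℤ) (hne : l ≠ []) (hev : ∀ b ∈ l, Even b)
    (hnz : ∀ b ∈ l, b ≠ 0) :
    ∃ q : ℚ, cfVal l = Option.some q ∧ Odd (q.num + (q.den : ℤ)) ∧ 1 < |q| := by
  induction l with
  | nil => exact absurd rfl hne
  | cons b t ih =>
    rcases eq_or_ne t [] with rfl | ht
    · refine ⟨(b : ℚ), ?_, ?_, ?_⟩
      · simp [cfVal, cfInv]
      · simp only [Rat.num_intCast, Rat.den_intCast]
        obtain ⟨k, hk⟩ := hev b (by simp)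
        exact ⟨k, by omega⟩
      · rw [← Int.cast_abs]
        exact_mod_cast (by have := hnz b (by simp); obtain ⟨k, hk⟩ := hev b (by simp)
                           rw [Int.abs_eq_natAbs]; omega : (1 : ℤ) < |b|)
    · obtain ⟨q, hq, hodd, hq1⟩ := ih ht (fun x hx => hev x (by simp [hx]))
        (fun x hx => hnz x (by simp [hx]))
      have hq0 : q ≠ 0 := by intro h; rw [h] at hq1; norm_num at hq1
      have hb := hev b (by simp)
      have hb0 := hnz b (by simp)
      refine ⟨(b : ℚ) + q⁻¹, ?_, ?_, ?_⟩
      · simp [cfVal, hq, cfInv, hq0]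
      · exact parity_step b hb q hodd hq1
      · exact abs_step b hb hb0 q hq1

/-- The value of any finite even-integer continued fraction is an ∞-rational
(or ∞ itself when the continued fraction is empty). -/
theorem eicf_finite_value_is_infty_rational (l : List ℤ)
    (heven : ∀ b ∈ l, Even b) (hnz : ∀ b ∈ l.tail, b ≠ 0) :
    (l = [] ∧ cfVal l = Option.none) ∨
      ∃ q : ℚ, cfVal l = Option.some q ∧ Odd (q.num + (q.den : ℤ)) := by
  match l with
  | [] => exact Or.inl ⟨rfl, rfl⟩
  | b :: t =>
    right
    rcases eq_or_ne t [] with rfl | ht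
    · refine ⟨(b : ℚ), by simp [cfVal, cfInv], ?_⟩
      simp only [Rat.num_intCast, Rat.den_intCast]
      obtain ⟨k, hk⟩ := heven b (by simp)
      exact ⟨k, by omega⟩
    · obtain ⟨q, hq, hodd, hq1⟩ := eicf_aux t ht
        (fun x hx => heven x (by simp [hx])) (fun x hx => hnz x (by simpa using hx))
      have hq0 : q ≠ 0 := by intro h; rw [h] at hq1; norm_num at hq1
      exact ⟨(b : ℚ) + q⁻¹, by simp [cfVal, hq, cfInv, hq0],
        parity_step b (heven b (by simp)) q hodd hq1⟩
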